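/- Let L: ℝᵈ → ℝ be differentiable and λ-smooth, let x ∈ ℝᵈ, let ε ≥ 0, and fix a partition of {1,…,d} into nonempty disjoint subsets S₁,…,S_t whose union is {1,…,d}. Then the group-norm-constrained adversarial loss satisfies |sup_{‖δ‖_{2,∞} ≤ ε} L(x + δ) − L(x) − ε‖∇L(x)‖_{2,1}| ≤ λ·t·ε²/2. -/

import Mathlib

open scoped RealInnerProductSpace


lemma stmt15_descent {d : ℕ} (L : EuclideanSpace ℝ (Fin d) → ℝ) (lam : ℝ)
    (hlam : 0 ≤ lam)
    (hdiff : Differentiable ℝ L)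
    (hsmooth : ∀ x z : EuclideanSpace ℝ (Fin d),
      ‖gradient L x - gradient L z‖ ≤ lam * ‖x - z‖)
    (x δ : EuclideanSpace ℝ (Fin d)) :
    |L (x + δ) - L x - ⟪gradient L x, δ⟫| ≤ lam / 2 * ‖δ‖ ^ 2 := by
  have hgc : Continuous fun y => gradient L y := by
    have : LipschitzWith lam.toNNReal fun y => gradient L y := by
      apply LipschitzWith.of_dist_le_mul
      intro a c
      rw [dist_eq_norm, dist_eq_norm, Real.coe_toNNReal _ hlam]
      exact hsmooth a c
    exact this.continuous
  set φ : ℝ → ℝ := fun s => ⟪gradient L (x + s • δ), δ⟫ with hφ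
  have hpath : ∀ s : ℝ, HasDerivAt (fun s : ℝ => x + s • δ) δ s := by
    intro s
    simpa using ((hasDerivAt_id s).smul_const δ).const_add x
  have hderiv : ∀ s : ℝ, HasDerivAt (fun s : ℝ => L (x + s • δ)) (φ s) s := by
    intro s
    have hF : HasFDerivAt L ((InnerProductSpace.toDual ℝ _)
        (gradient L (x + s • δ))) (x + s • δ) :=
      (hdiff _).hasGradientAt.hasFDerivAt
    have := hF.comp_hasDerivAt s (hpath s)
    rw [InnerProductSpace.toDual_apply_apply] at this
    exact this
  have hφc : Continuous φ := by
    apply Continuous.inner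
    · exact hgc.comp (by continuity)
    · exact continuous_const
  have hint : IntervalIntegrable φ MeasureTheory.volume 0 1 := hφc.intervalIntegrable 0 1
  have key : L (x + δ) - L x = ∫ s in (0:ℝ)..1, φ s := by
    have := intervalIntegral.integral_eq_sub_of_hasDerivAt
      (f := fun s : ℝ => L (x + s • δ)) (fun s _ => hderiv s) hint
    simpa using this.symm
  have hconst : IntervalIntegrable (fun _ : ℝ => ⟪gradient L x, δ⟫) MeasureTheory.volume 0 1 :=
    intervalIntegrable_const
  have key2 : L (x + δ) - L x - ⟪gradient L x, δ⟫
      = ∫ s in (0:ℝ)..1, (φ s - ⟪gradient L x, δ⟫) := by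
    rw [intervalIntegral.integral_sub hint hconst, ← key]
    simp
  rw [key2]
  have hptwise : ∀ s ∈ Set.Icc (0:ℝ) 1, |φ s - ⟪gradient L x, δ⟫| ≤ lam * ‖δ‖ ^ 2 * s := by
    intro s hs
    have h1 : φ s - ⟪gradient L x, δ⟫ = ⟪gradient L (x + s • δ) - gradient L x, δ⟫ := by
      rw [inner_sub_left]
    rw [h1]
    calc |⟪gradient L (x + s • δ) - gradient L x, δ⟫|
        ≤ ‖gradient L (x + s • δ) - gradient L x‖ * ‖δ‖ := abs_real_inner_le_norm _ _
      _ ≤ (lam * ‖(x + s • δ) - x‖) * ‖δ‖ := by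
          apply mul_le_mul_of_nonneg_right (hsmooth _ _) (norm_nonneg _)
      _ = lam * ‖δ‖ ^ 2 * s := by
          rw [add_sub_cancel_left, norm_smul, Real.norm_eq_abs, abs_of_nonneg hs.1]
          ring
  calc |∫ s in (0:ℝ)..1, (φ s - ⟪gradient L x, δ⟫)|
      ≤ ∫ s in (0:ℝ)..1, |φ s - ⟪gradient L x, δ⟫| :=
        intervalIntegral.abs_integral_le_integral_abs zero_le_one
    _ ≤ ∫ s in (0:ℝ)..1, lam * ‖δ‖ ^ 2 * s := by
        apply intervalIntegral.integral_mono_on zero_le_one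
        · exact (hint.sub hconst).abs
        · exact ((continuous_const.mul continuous_id).intervalIntegrable 0 1)
        · exact hptwise
    _ = lam * ‖δ‖ ^ 2 * (1 / 2) := by
        rw [intervalIntegral.integral_const_mul, integral_id]
        norm_num
    _ = lam / 2 * ‖δ‖ ^ 2 := by ring

/-- for a differentiable, λ-smooth `L : ℝᵈ → ℝ`, any `x`, `ε ≥ 0`, and a
partition of `{1,…,d}` into nonempty blocks (encoded by a surjective block-assignment map
`b : Fin d → Fin t`), the group-norm-constrained adversarial loss satisfies
`|sup_{‖δ‖_{2,∞} ≤ ε} L(x + δ) − L(x) − ε ‖∇L(x)‖_{2,1}| ≤ λ t ε² / 2`. -/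
theorem stmt_15 {d t : ℕ} (L : EuclideanSpace ℝ (Fin d) → ℝ) (lam : ℝ)
    (hdiff : Differentiable ℝ L)
    (hsmooth : ∀ x z : EuclideanSpace ℝ (Fin d),
      ‖gradient L x - gradient L z‖ ≤ lam * ‖x - z‖)
    (x : EuclideanSpace ℝ (Fin d)) (ε : ℝ) (hε : 0 ≤ ε)
    (b : Fin d → Fin t) (hb : Function.Surjective b) :
    |(sSup {r : ℝ | ∃ δ : EuclideanSpace ℝ (Fin d),
          (∀ j, Real.sqrt (∑ i ∈ Finset.univ.filter (fun i => b i = j), δ i ^ 2) ≤ ε) ∧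
          r = L (x + δ)}
        - L x
        - ε * ∑ j, Real.sqrt
            (∑ i ∈ Finset.univ.filter (fun i => b i = j), gradient L x i ^ 2))|
      ≤ lam * t * ε ^ 2 / 2 := by
  rcases Nat.eq_zero_or_pos d with hd | hd
  · -- degenerate case: d = 0, hence t = 0
    subst hd
    have ht : t = 0 := by
      rcases Nat.eq_zero_or_pos t with h | h
      · exact h
      · obtain ⟨i, -⟩ := hb ⟨0, h⟩
        exact absurd i.isLt (by omega)
    subst ht
    have hset : {r : ℝ | ∃ δ : EuclideanSpace ℝ (Fin 0),
        (∀ j, Real.sqrt (∑ i ∈ Finset.univ.filter (fun i => b i = j), δ i ^ 2) ≤ ε) ∧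
        r = L (x + δ)} = {L x} := by
      ext r
      constructor
      · rintro ⟨δ, -, rfl⟩
        have hδ0 : δ = 0 := by ext i; exact (i : Fin 0).elim0
        simp [hδ0]
      · rintro rfl
        exact ⟨0, fun j => j.elim0, by simp⟩
    rw [hset, csSup_singleton]
    simp
  · -- main case: d > 0
    have i0 : Fin d := ⟨0, hd⟩
    have hlam : 0 ≤ lam := by
      have h := hsmooth (EuclideanSpace.single i0 (1 : ℝ)) 0
      rw [sub_zero] at h
      have h1 : ‖EuclideanSpace.single i0 (1 : ℝ)‖ = 1 := by
        rw [EuclideanSpace.norm_single]; norm_num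
      rw [h1, mul_one] at h
      exact le_trans (norm_nonneg _) h
    set A : Set ℝ := {r : ℝ | ∃ δ : EuclideanSpace ℝ (Fin d),
        (∀ j, Real.sqrt (∑ i ∈ Finset.univ.filter (fun i => b i = j), δ i ^ 2) ≤ ε) ∧
        r = L (x + δ)} with hA
    have hblocksq : ∀ (δ : EuclideanSpace ℝ (Fin d)),
        (∀ j, Real.sqrt (∑ i ∈ Finset.univ.filter (fun i => b i = j), δ i ^ 2) ≤ ε) →
        ∀ j, ∑ i ∈ Finset.univ.filter (fun i => b i = j), δ i ^ 2 ≤ ε ^ 2 := by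
      intro δ hδ j
      have h0 : 0 ≤ ∑ i ∈ Finset.univ.filter (fun i => b i = j), δ i ^ 2 :=
        Finset.sum_nonneg fun i _ => sq_nonneg _
      calc ∑ i ∈ Finset.univ.filter (fun i => b i = j), δ i ^ 2
          = Real.sqrt (∑ i ∈ Finset.univ.filter (fun i => b i = j), δ i ^ 2) ^ 2 :=
            (Real.sq_sqrt h0).symm
        _ ≤ ε ^ 2 := pow_le_pow_left₀ (Real.sqrt_nonneg _) (hδ j) 2
    have hnormsq : ∀ (δ : EuclideanSpace ℝ (Fin d)),
        (∀ j, Real.sqrt (∑ i ∈ Finset.univ.filter (fun i => b i = j), δ i ^ 2) ≤ ε) →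
        ‖δ‖ ^ 2 ≤ t * ε ^ 2 := by
      intro δ hδ
      have h1 : ‖δ‖ ^ 2 = ∑ i, δ i ^ 2 := by
        rw [EuclideanSpace.norm_eq,
          Real.sq_sqrt (Finset.sum_nonneg fun i _ => sq_nonneg _)]
        simp [Real.norm_eq_abs, sq_abs]
      rw [h1, ← Finset.sum_fiberwise Finset.univ b (fun i => δ i ^ 2)]
      calc ∑ j, ∑ i ∈ Finset.univ.filter (fun i => b i = j), δ i ^ 2
          ≤ ∑ _j : Fin t, ε ^ 2 := Finset.sum_le_sum fun j _ => hblocksq δ hδ j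
        _ = t * ε ^ 2 := by simp [Finset.sum_const, Finset.card_univ, nsmul_eq_mul]
    have hinner_sum : ∀ (δ : EuclideanSpace ℝ (Fin d)),
        ⟪gradient L x, δ⟫ = ∑ i, gradient L x i * δ i := by
      intro δ
      simp only [PiLp.inner_apply, RCLike.inner_apply, conj_trivial]
      exact Finset.sum_congr rfl fun i _ => mul_comm _ _
    have hinner_le : ∀ (δ : EuclideanSpace ℝ (Fin d)),
        (∀ j, Real.sqrt (∑ i ∈ Finset.univ.filter (fun i => b i = j), δ i ^ 2) ≤ ε) →
        ⟪gradient L x, δ⟫ ≤ ε * ∑ j, Real.sqrt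
          (∑ i ∈ Finset.univ.filter (fun i => b i = j), gradient L x i ^ 2) := by
      intro δ hδ
      rw [hinner_sum δ, ← Finset.sum_fiberwise Finset.univ b (fun i => gradient L x i * δ i),
        Finset.mul_sum]
      apply Finset.sum_le_sum
      intro j _
      calc ∑ i ∈ Finset.univ.filter (fun i => b i = j), gradient L x i * δ i
          ≤ Real.sqrt (∑ i ∈ Finset.univ.filter (fun i => b i = j), gradient L x i ^ 2) *
            Real.sqrt (∑ i ∈ Finset.univ.filter (fun i => b i = j), δ i ^ 2) :=
            Real.sum_mul_le_sqrt_mul_sqrt _ _ _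
        _ ≤ Real.sqrt (∑ i ∈ Finset.univ.filter (fun i => b i = j), gradient L x i ^ 2) * ε :=
            mul_le_mul_of_nonneg_left (hδ j) (Real.sqrt_nonneg _)
        _ = ε * Real.sqrt (∑ i ∈ Finset.univ.filter (fun i => b i = j), gradient L x i ^ 2) :=
            mul_comm _ _
    have hub : ∀ r ∈ A, r ≤ L x + ε * (∑ j, Real.sqrt
        (∑ i ∈ Finset.univ.filter (fun i => b i = j), gradient L x i ^ 2))
        + lam * t * ε ^ 2 / 2 := by
      rintro r ⟨δ, hδ, rfl⟩
      have hd2 := abs_le.mp (stmt15_descent L lam hlam hdiff hsmooth x δ)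
      have h4 : lam / 2 * ‖δ‖ ^ 2 ≤ lam * t * ε ^ 2 / 2 := by
        have h5 := hnormsq δ hδ
        nlinarith [hlam]
      linarith [hinner_le δ hδ, hd2.2]
    have hne : A.Nonempty := by
      refine ⟨L x, 0, fun j => ?_, by simp⟩
      have h0 : ∀ i : Fin d, (0 : EuclideanSpace ℝ (Fin d)) i = 0 := fun i => rfl
      simp only [h0]
      simpa using hε
    have hbdd : BddAbove A := ⟨_, hub⟩
    have hsup_le := csSup_le hne hub
    -- the maximizing perturbation
    set δs : EuclideanSpace ℝ (Fin d) := WithLp.toLp 2 fun i =>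
      ε * (gradient L x i / Real.sqrt
        (∑ k ∈ Finset.univ.filter (fun k => b k = b i), gradient L x k ^ 2)) with hδs
    have hQ : ∀ j, (0 : ℝ) ≤ ∑ i ∈ Finset.univ.filter (fun i => b i = j), gradient L x i ^ 2 :=
      fun j => Finset.sum_nonneg fun i _ => sq_nonneg _
    have hδs_sum : ∀ j, ∑ i ∈ Finset.univ.filter (fun i => b i = j), δs i ^ 2
        = (ε / Real.sqrt (∑ i ∈ Finset.univ.filter (fun i => b i = j), gradient L x i ^ 2)) ^ 2
          * (∑ i ∈ Finset.univ.filter (fun i => b i = j), gradient L x i ^ 2) := by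
      intro j
      have hcong : ∀ i ∈ Finset.univ.filter (fun i => b i = j), δs i ^ 2 =
          (ε / Real.sqrt (∑ i ∈ Finset.univ.filter (fun i => b i = j), gradient L x i ^ 2)) ^ 2
            * gradient L x i ^ 2 := by
        intro i hi
        have hbi : b i = j := (Finset.mem_filter.mp hi).2
        simp only [hδs, hbi, PiLp.toLp_apply]
        ring
      rw [Finset.sum_congr rfl hcong, ← Finset.mul_sum]
    have hδs_feas : ∀ j, Real.sqrt
        (∑ i ∈ Finset.univ.filter (fun i => b i = j), δs i ^ 2) ≤ ε := by
      intro j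
      rw [hδs_sum j]
      rcases eq_or_ne (Real.sqrt
          (∑ i ∈ Finset.univ.filter (fun i => b i = j), gradient L x i ^ 2)) 0 with h | h
      · have hQ0 : ∑ i ∈ Finset.univ.filter (fun i => b i = j), gradient L x i ^ 2 = 0 := by
          exact le_antisymm (Real.sqrt_eq_zero'.mp h) (hQ j)
        rw [hQ0, mul_zero, Real.sqrt_zero]
        exact hε
      · have hQne : (∑ i ∈ Finset.univ.filter (fun i => b i = j), gradient L x i ^ 2) ≠ 0 := by
          intro hc
          exact h (by rw [hc, Real.sqrt_zero])
        have heq : (ε / Real.sqrt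
            (∑ i ∈ Finset.univ.filter (fun i => b i = j), gradient L x i ^ 2)) ^ 2
            * (∑ i ∈ Finset.univ.filter (fun i => b i = j), gradient L x i ^ 2) = ε ^ 2 := by
          rw [div_pow, Real.sq_sqrt (hQ j)]
          field_simp
        rw [heq, Real.sqrt_sq hε]
    have hδs_inner : ⟪gradient L x, δs⟫ = ε * ∑ j, Real.sqrt
        (∑ i ∈ Finset.univ.filter (fun i => b i = j), gradient L x i ^ 2) := by
      rw [hinner_sum δs, ← Finset.sum_fiberwise Finset.univ b (fun i => gradient L x i * δs i),
        Finset.mul_sum]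
      apply Finset.sum_congr rfl
      intro j _
      have hcong : ∀ i ∈ Finset.univ.filter (fun i => b i = j), gradient L x i * δs i =
          ε / Real.sqrt (∑ i ∈ Finset.univ.filter (fun i => b i = j), gradient L x i ^ 2)
            * gradient L x i ^ 2 := by
        intro i hi
        have hbi : b i = j := (Finset.mem_filter.mp hi).2
        simp only [hδs, hbi, PiLp.toLp_apply]
        ring
      rw [Finset.sum_congr rfl hcong, ← Finset.mul_sum]
      set sj := Real.sqrt (∑ i ∈ Finset.univ.filter (fun i => b i = j), gradient L x i ^ 2)
        with hsj
      rcases eq_or_ne sj 0 with h | h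
      · have hQ0 : ∑ i ∈ Finset.univ.filter (fun i => b i = j), gradient L x i ^ 2 = 0 := by
          nlinarith [Real.sq_sqrt (hQ j), hsj]
        rw [hQ0, h]
        simp
      · have hs2 : sj ^ 2 = ∑ i ∈ Finset.univ.filter (fun i => b i = j), gradient L x i ^ 2 :=
          Real.sq_sqrt (hQ j)
        rw [← hs2]
        field_simp
    have hmem : L (x + δs) ∈ A := ⟨δs, hδs_feas, rfl⟩
    have hge := le_csSup hbdd hmem
    have hd2 := abs_le.mp (stmt15_descent L lam hlam hdiff hsmooth x δs)
    have h4 : lam / 2 * ‖δs‖ ^ 2 ≤ lam * t * ε ^ 2 / 2 := by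
      have h5 := hnormsq δs hδs_feas
      nlinarith [hlam]
    rw [abs_le]
    constructor
    · linarith [hd2.1, hge, h4, hδs_inner]
    · linarith [hsup_le]
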